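/- If a₁, a₂, q₁, q₂ are integers with a₁a₂ ≠ 0, |λ₁αq₁ − a₁| ≤ Q/X and |λ₂αq₂ − a₂| ≤ Q/X for some α ≠ 0, then |a₂q₁(λ₁/λ₂) − a₁q₂| ≤ 2(1 + |λ₁/λ₂|)·(max(|a₁|,|a₂|)/|λ₂α|)·(Q/X). In particular if |aᵢ| ≤ 2|λᵢ|·|α|·qᵢ and qᵢ ≤ Q then |a₂q₁(λ₁/λ₂) − a₁q₂| ≤ C(λ₁,λ₂)·Q²/X. -/

import Mathlib

open MeasureTheory Finset
open scoped Classical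
noncomputable section

/-- `e(x) = e^{2πix}` -/
def e2 (x : ℝ) : ℂ := Complex.exp (2 * Real.pi * Complex.I * (x : ℂ))

/-- Fejér-type kernel `K_η(α) = (sin(πηα)/(πα))²`, with `K_η(0) = η²`. -/
def Keta (η α : ℝ) : ℝ :=
  if α = 0 then η ^ 2 else (Real.sin (Real.pi * η * α) / (Real.pi * α)) ^ 2

/-- `S_k(α) = Σ_{δX ≤ p^k ≤ X} log p · e(p^k α)` over primes `p`. -/
def Skp (k δ X α : ℝ) : ℂ :=
  ∑ p ∈ Finset.range (⌊X⌋₊ + 1),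
    if p.Prime ∧ δ * X ≤ (p : ℝ) ^ k ∧ (p : ℝ) ^ k ≤ X
      then (Real.log p : ℂ) * e2 ((p : ℝ) ^ k * α) else 0

/-- `S₁(α) = Σ_{δX ≤ p ≤ X} log p · e(pα)` over primes `p`. -/
def Ssum (δ X α : ℝ) : ℂ :=
  ∑ p ∈ Finset.range (⌊X⌋₊ + 1),
    if p.Prime ∧ δ * X ≤ (p : ℝ) ∧ (p : ℝ) ≤ X
      then (Real.log p : ℂ) * e2 ((p : ℝ) * α) else 0

/-- `S(α) = Σ_{p ≤ X} log p · e(pα)` over primes `p`. -/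
def Sfull (X α : ℝ) : ℂ :=
  ∑ p ∈ Finset.range (⌊X⌋₊ + 1),
    if p.Prime ∧ (p : ℝ) ≤ X then (Real.log p : ℂ) * e2 ((p : ℝ) * α) else 0

/-- `U_k(α) = Σ_{δX ≤ n^k ≤ X} e(n^k α)` over positive integers `n`. -/
def Uk (k δ X α : ℝ) : ℂ :=
  ∑ n ∈ Finset.range (⌊X⌋₊ + 1),
    if 1 ≤ n ∧ δ * X ≤ (n : ℝ) ^ k ∧ (n : ℝ) ^ k ≤ X
      then e2 ((n : ℝ) ^ k * α) else 0

/-- `T_k(α) = ∫_{(δX)^{1/k}}^{X^{1/k}} e(t^k α) dt`. -/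
def Tk (k δ X α : ℝ) : ℂ :=
  ∫ t in (δ * X) ^ (1 / k)..(X ^ (1 / k)), e2 (t ^ k * α)

/-- Chebyshev function `θ(t) = Σ_{p ≤ t} log p`. -/
def chebθ (t : ℝ) : ℝ :=
  ∑ p ∈ Finset.range (⌊t⌋₊ + 1), if p.Prime then Real.log p else 0

/-- Generalized Selberg integral `J_k(X,h)`. -/
def Jsel (k X h : ℝ) : ℝ :=
  ∫ x in X..(2 * X),
    (chebθ ((x + h) ^ (1 / k)) - chebθ (x ^ (1 / k)) - ((x + h) ^ (1 / k) - x ^ (1 / k))) ^ 2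

theorem stmt10 (l1 l2 α Q X : ℝ) (hl1 : l1 ≠ 0) (hl2 : l2 ≠ 0) (hα : α ≠ 0)
    (hQ : 0 < Q) (hX : 0 < X) (hQX : Q ≤ X)
    (a1 a2 q1 q2 : ℤ) (ha : a1 * a2 ≠ 0) (hq1 : 1 ≤ q1) (hq2 : 1 ≤ q2)
    (hd1 : |l1 * α * (q1 : ℝ) - (a1 : ℝ)| ≤ Q / X)
    (hd2 : |l2 * α * (q2 : ℝ) - (a2 : ℝ)| ≤ Q / X) :
    |(a2 : ℝ) * (q1 : ℝ) * (l1 / l2) - (a1 : ℝ) * (q2 : ℝ)|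
      ≤ 2 * (1 + |l1 / l2|) * (max |(a1 : ℝ)| |(a2 : ℝ)| / |l2 * α|) * (Q / X) ∧
    (|(a1 : ℝ)| ≤ 2 * |l1| * |α| * (q1 : ℝ) → |(a2 : ℝ)| ≤ 2 * |l2| * |α| * (q2 : ℝ) →
      (q1 : ℝ) ≤ Q → (q2 : ℝ) ≤ Q →
      |(a2 : ℝ) * (q1 : ℝ) * (l1 / l2) - (a1 : ℝ) * (q2 : ℝ)|
        ≤ (4 * (1 + |l1 / l2|) * max |l1| |l2| / |l2|) * Q ^ 2 / X) := by
  have hl2a : l2 * α ≠ 0 := mul_ne_zero hl2 hα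
  have hl2a' : 0 < |l2 * α| := abs_pos.mpr hl2a
  set M := max |(a1 : ℝ)| |(a2 : ℝ)| with hM
  have hMnn : 0 ≤ M := le_trans (abs_nonneg _) (le_max_left _ _)
  have key : (a2 : ℝ) * q1 * (l1 / l2) - a1 * q2
      = ((l1 * α * q1 - a1) * a2 - (l2 * α * q2 - a2) * a1) / (l2 * α) := by
    field_simp
    ring
  have hQX' : 0 ≤ Q / X := le_of_lt (div_pos hQ hX)
  have hnum : |(l1 * α * q1 - (a1:ℝ)) * a2 - (l2 * α * q2 - a2) * a1|
      ≤ 2 * M * (Q / X) := by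
    calc |(l1 * α * q1 - (a1:ℝ)) * a2 - (l2 * α * q2 - a2) * a1|
        ≤ |(l1 * α * q1 - (a1:ℝ)) * a2| + |(l2 * α * q2 - (a2:ℝ)) * a1| := abs_sub _ _
      _ = |l1 * α * q1 - (a1:ℝ)| * |(a2:ℝ)| + |l2 * α * q2 - (a2:ℝ)| * |(a1:ℝ)| := by
          rw [abs_mul, abs_mul]
      _ ≤ (Q / X) * M + (Q / X) * M := by
          gcongr
          · exact le_max_right _ _
          · exact le_max_left _ _
      _ = 2 * M * (Q / X) := by ring
  have main : |(a2 : ℝ) * q1 * (l1 / l2) - a1 * q2| ≤ 2 * M / |l2 * α| * (Q / X) := by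
    rw [key, abs_div]
    rw [div_mul_eq_mul_div, div_le_div_iff₀ hl2a' hl2a']
    calc |(l1 * α * q1 - (a1:ℝ)) * a2 - (l2 * α * q2 - a2) * a1| * |l2 * α|
        ≤ (2 * M * (Q / X)) * |l2 * α| := by gcongr
      _ = 2 * M * (Q / X) * |l2 * α| := by ring
  have hr : (1:ℝ) ≤ 1 + |l1 / l2| := le_add_of_nonneg_right (abs_nonneg _)
  constructor
  · calc |(a2 : ℝ) * q1 * (l1 / l2) - a1 * q2| ≤ 2 * M / |l2 * α| * (Q / X) := main
      _ = 2 * 1 * (M / |l2 * α|) * (Q / X) := by ring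
      _ ≤ 2 * (1 + |l1 / l2|) * (M / |l2 * α|) * (Q / X) := by
          have : (0:ℝ) ≤ M / |l2 * α| := div_nonneg hMnn (le_of_lt hl2a')
          gcongr
  · intro h1 h2 hq1Q hq2Q
    have hq1' : (1:ℝ) ≤ (q1:ℝ) := by exact_mod_cast hq1
    have hq2' : (1:ℝ) ≤ (q2:ℝ) := by exact_mod_cast hq2
    have hL : max |l1| |l2| * |α| = max (|l1| * |α|) (|l2| * |α|) := by
      rw [max_mul_of_nonneg _ _ (abs_nonneg α)]
    have hMb : M ≤ 2 * max |l1| |l2| * |α| * Q := by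
      apply max_le
      · calc |(a1:ℝ)| ≤ 2 * |l1| * |α| * q1 := h1
          _ ≤ 2 * max |l1| |l2| * |α| * Q := by
              gcongr <;> first | exact le_max_left _ _ | exact hq1Q
      · calc |(a2:ℝ)| ≤ 2 * |l2| * |α| * q2 := h2
          _ ≤ 2 * max |l1| |l2| * |α| * Q := by
              gcongr <;> first | exact le_max_right _ _ | exact hq2Q
    have habs : |l2 * α| = |l2| * |α| := abs_mul _ _
    calc |(a2 : ℝ) * q1 * (l1 / l2) - a1 * q2| ≤ 2 * M / |l2 * α| * (Q / X) := main
      _ ≤ 2 * (2 * max |l1| |l2| * |α| * Q) / |l2 * α| * (Q / X) := by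
          gcongr
      _ = (4 * max |l1| |l2| / |l2|) * Q ^ 2 / X := by
          rw [habs]
          field_simp
          ring
      _ ≤ (4 * (1 + |l1 / l2|) * max |l1| |l2| / |l2|) * Q ^ 2 / X := by
          gcongr ?_ * Q ^ 2 / X
          rw [div_le_div_iff₀ (abs_pos.mpr hl2) (abs_pos.mpr hl2)]
          have : 0 ≤ max |l1| |l2| := le_trans (abs_nonneg _) (le_max_left _ _)
          nlinarith [mul_nonneg (mul_nonneg (abs_nonneg (l1/l2)) this) (abs_nonneg l2)]


end
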